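/- Let m, n ≥ 3 and let B_{m,n} = K_1 ∨ (P_{m-1} ∪ P_{n-1}) be the bow graph with apex c. The visibility polynomial of B_{m,n} is V(B_{m,n})(x) = (1+x)^{m+n-2} + x + (m+n-2)x^2 + (2m+2n-10)x^3. -/

import Mathlib

open SimpleGraph Polynomial

/-- Two vertices `u` and `v` are `X`-visible in `G` if some shortest `u`–`v` path
has no internal vertex in `X`, i.e. its support meets `X` only possibly in `{u, v}`. -/
def XVisible {V : Type*} (G : SimpleGraph V) (X : Set V) (u v : V) : Prop :=
  ∃ p : G.Walk u v, p.IsPath ∧ p.length = G.dist u v ∧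
    ∀ w ∈ p.support, w ∈ X → w = u ∨ w = v

/-- `X` is a mutual-visibility set of `G` if every pair of vertices of `X` is `X`-visible. -/
def MutualVisibilitySet {V : Type*} (G : SimpleGraph V) (X : Set V) : Prop :=
  ∀ u ∈ X, ∀ v ∈ X, XVisible G X u v

open Classical in
/-- The visibility polynomial: `∑ m_k x^k` where `m_k` is the number of
mutual-visibility sets of cardinality `k`. -/
noncomputable def visPoly {V : Type*} [Fintype V] (G : SimpleGraph V) : Polynomial ℕ :=
  ∑ S ∈ Finset.univ.powerset.filter (fun S : Finset V => MutualVisibilitySet G ↑S),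
    Polynomial.X ^ S.card

/-- The wheel graph with rim `cycleGraph m` (on `some`-vertices) and hub `none`. -/
def wheelGraph (m : ℕ) : SimpleGraph (Option (Fin m)) :=
  SimpleGraph.fromRel (fun u v =>
    (u = none ∧ v ≠ none) ∨
    ∃ i j : Fin m, u = some i ∧ v = some j ∧ (SimpleGraph.cycleGraph m).Adj i j)

/-- The shell graph with path `pathGraph m` (on `some`-vertices) and apex `none`. -/
def shellGraph (m : ℕ) : SimpleGraph (Option (Fin m)) :=
  SimpleGraph.fromRel (fun u v =>
    (u = none ∧ v ≠ none) ∨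
    ∃ i j : Fin m, u = some i ∧ v = some j ∧ (SimpleGraph.pathGraph m).Adj i j)

/-- The bow graph: apex `none` joined to two disjoint paths of `a` and `b` vertices. -/
def bowGraph (a b : ℕ) : SimpleGraph (Option (Fin a ⊕ Fin b)) :=
  SimpleGraph.fromRel (fun u v =>
    (u = none ∧ v ≠ none) ∨
    (∃ i j : Fin a, u = some (Sum.inl i) ∧ v = some (Sum.inl j) ∧ (SimpleGraph.pathGraph a).Adj i j) ∨
    (∃ i j : Fin b, u = some (Sum.inr i) ∧ v = some (Sum.inr j) ∧ (SimpleGraph.pathGraph b).Adj i j))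

/-- The friendship graph: center `none`; the `i`-th triangle has the two
noncentral vertices `some (i, 0)` and `some (i, 1)`. -/
def friendshipGraph (n : ℕ) : SimpleGraph (Option (Fin n × Fin 2)) :=
  SimpleGraph.fromRel (fun u v =>
    (u = none ∧ v ≠ none) ∨
    ∃ (i : Fin n) (x y : Fin 2), u = some (i, x) ∧ v = some (i, y) ∧ x ≠ y)

/-- The helm graph: a copy of the wheel (the `Sum.inl`-vertices) together with a
pendant vertex `Sum.inr k` attached to each rim vertex `Sum.inl (some k)`. -/
def helmGraph (m : ℕ) : SimpleGraph (Option (Fin m) ⊕ Fin m) :=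
  SimpleGraph.fromRel (fun u v =>
    (∃ x y : Option (Fin m), u = Sum.inl x ∧ v = Sum.inl y ∧ (wheelGraph m).Adj x y) ∨
    (∃ k : Fin m, u = Sum.inl (some k) ∧ v = Sum.inr k))

/-- `W` is a `c_Q`-visible set: `W ⊆ V \ Q`, every pair of vertices of `W` is
`Q`-visible, and `{u, w}` is `Q`-visible for all `u ∈ Q`, `w ∈ W`. -/
def CQVisible {V : Type*} (G : SimpleGraph V) (Q W : Set V) : Prop :=
  W ⊆ Qᶜ ∧ (∀ u ∈ W, ∀ v ∈ W, XVisible G Q u v) ∧ (∀ u ∈ Q, ∀ w ∈ W, XVisible G Q u w)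

/-- An absolute `c_Q`-visible set: a `c_Q`-visible set for which `Q` is moreover a
mutual-visibility set of `G`. -/
def AbsoluteCQVisible {V : Type*} (G : SimpleGraph V) (Q W : Set V) : Prop :=
  CQVisible G Q W ∧ MutualVisibilitySet G Q

namespace BowAux

open SimpleGraph Finset

/-! ### Generic `XVisible` helpers -/

lemma walk_len2 {V : Type*} {G : SimpleGraph V} {u v : V} (p : G.Walk u v)
    (h : p.length = 2) : ∃ t, G.Adj u t ∧ G.Adj t v ∧ p.support = [u, t, v] := by
  cases p with
  | nil => simp at h
  | cons h1 q =>
    cases q with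
    | nil => simp at h
    | cons h2 r =>
      cases r with
      | nil => exact ⟨_, h1, h2, rfl⟩
      | cons h3 s => simp [SimpleGraph.Walk.length_cons] at h

lemma xvis_refl {V : Type*} {G : SimpleGraph V} {X : Set V} (u : V) :
    XVisible G X u u :=
  ⟨SimpleGraph.Walk.nil, SimpleGraph.Walk.IsPath.nil, by simp [SimpleGraph.dist_self],
    by simp⟩

lemma xvis_adj {V : Type*} {G : SimpleGraph V} {X : Set V} {u v : V} (h : G.Adj u v) :
    XVisible G X u v := by
  refine ⟨SimpleGraph.Walk.cons h SimpleGraph.Walk.nil, ?_, ?_, ?_⟩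
  · simp [SimpleGraph.Walk.cons_isPath_iff, h.ne]
  · simp [SimpleGraph.dist_eq_one_iff_adj.2 h]
  · intro w hw _
    simpa using hw

lemma dist_eq_two {V : Type*} {G : SimpleGraph V} {u v t : V} (hne : u ≠ v)
    (hna : ¬ G.Adj u v) (h1 : G.Adj u t) (h2 : G.Adj t v) : G.dist u v = 2 := by
  have hle : G.dist u v ≤ 2 := by
    have := SimpleGraph.dist_le (SimpleGraph.Walk.cons h1 (SimpleGraph.Walk.cons h2 SimpleGraph.Walk.nil))
    simpa using this
  have h0 : G.dist u v ≠ 0 := by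
    have : G.Reachable u v := ⟨SimpleGraph.Walk.cons h1 (SimpleGraph.Walk.cons h2 SimpleGraph.Walk.nil)⟩
    have h := this.pos_dist_of_ne hne
    omega
  have h1' : G.dist u v ≠ 1 := fun h => hna (SimpleGraph.dist_eq_one_iff_adj.mp h)
  omega

lemma xvis_two {V : Type*} {G : SimpleGraph V} {X : Set V} {u v t : V} (hne : u ≠ v)
    (hna : ¬ G.Adj u v) (h1 : G.Adj u t) (h2 : G.Adj t v) (ht : t ∉ X) :
    XVisible G X u v := by
  refine ⟨SimpleGraph.Walk.cons h1 (SimpleGraph.Walk.cons h2 SimpleGraph.Walk.nil), ?_, ?_, ?_⟩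
  · simp [SimpleGraph.Walk.cons_isPath_iff, h2.ne, hne, h1.ne, h1.ne']
  · simpa using (dist_eq_two hne hna h1 h2).symm
  · intro w hw hwX
    simp only [SimpleGraph.Walk.support_cons, SimpleGraph.Walk.support_nil,
      List.mem_cons, List.mem_singleton] at hw
    rcases hw with rfl | rfl | rfl | h
    · exact Or.inl rfl
    · exact absurd hwX ht
    · exact Or.inr rfl
    · simp at h

lemma not_xvis_two {V : Type*} {G : SimpleGraph V} {X : Set V} {u v : V}
    (hd : G.dist u v = 2)
    (H : ∀ t, G.Adj u t → G.Adj t v → t ∈ X ∧ t ≠ u ∧ t ≠ v) :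
    ¬ XVisible G X u v := by
  rintro ⟨p, hp, hlen, hsup⟩
  rw [hd] at hlen
  obtain ⟨t, h1, h2, hs⟩ := walk_len2 p hlen
  obtain ⟨htX, htu, htv⟩ := H t h1 h2
  have := hsup t (by rw [hs]; simp) htX
  tauto

/-! ### The bow graph: coordinates and adjacency -/

variable {a b : ℕ}

/-- The value of a path vertex. -/
def vl : Fin a ⊕ Fin b → ℕ := Sum.elim Fin.val Fin.val

/-- The side of a path vertex. -/
def sd : Fin a ⊕ Fin b → Bool := Sum.elim (fun _ => false) (fun _ => true)

lemma eq_of_sd_vl {x y : Fin a ⊕ Fin b} (hs : sd x = sd y) (hv : vl x = vl y) :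
    x = y := by
  cases x <;> cases y <;> simp [sd, vl] at hs hv ⊢ <;> exact Fin.val_injective hv

lemma bow_adj_none_some (z : Fin a ⊕ Fin b) : (bowGraph a b).Adj none (some z) := by
  simp [bowGraph, SimpleGraph.fromRel_adj]

lemma bow_adj_some_some {x y : Fin a ⊕ Fin b} :
    (bowGraph a b).Adj (some x) (some y) ↔
      sd x = sd y ∧ (vl x + 1 = vl y ∨ vl y + 1 = vl x) := by
  cases x <;> cases y <;>
    simp [bowGraph, SimpleGraph.fromRel_adj, SimpleGraph.pathGraph_adj, sd, vl,
      Fin.ext_iff] <;>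
  · constructor
    · rintro ⟨hne, (⟨i, hi, z, hz, h⟩ | ⟨i, hi, z, hz, h⟩)⟩ <;> omega
    · intro h
      exact ⟨by omega, Or.inl ⟨_, rfl, _, rfl, by omega⟩⟩

lemma bow_adj_some {x : Fin a ⊕ Fin b} {t : Option (Fin a ⊕ Fin b)} :
    (bowGraph a b).Adj (some x) t ↔
      t = none ∨ ∃ z, t = some z ∧ sd x = sd z ∧ (vl x + 1 = vl z ∨ vl z + 1 = vl x) := by
  cases t with
  | none =>
    simp [((bow_adj_none_some (a := a) (b := b) x).symm : (bowGraph a b).Adj (some x) none)]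
  | some z =>
    simp [bow_adj_some_some]

/-- The middle-of-a-distance-2-pair construction. -/
def bump : Fin a ⊕ Fin b → Fin a ⊕ Fin b
  | Sum.inl i => Sum.inl ⟨(i.val + 1) % a, Nat.mod_lt _ i.pos⟩
  | Sum.inr j => Sum.inr ⟨(j.val + 1) % b, Nat.mod_lt _ j.pos⟩

lemma sd_bump (x : Fin a ⊕ Fin b) : sd (bump x) = sd x := by
  cases x <;> rfl

lemma vl_bump {x y : Fin a ⊕ Fin b} (hs : sd x = sd y) (hd : vl x + 2 = vl y) :
    vl (bump x) = vl x + 1 := by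
  cases x <;> cases y <;> simp [sd, vl, bump] at hs hd ⊢ <;>
    · rename_i i j; have := j.isLt; exact Nat.mod_eq_of_lt (by omega)

/-- Good pairs: adjacent or at distance two on the same path. -/
def GP (x y : Fin a ⊕ Fin b) : Prop :=
  sd x = sd y ∧ (vl x + 1 = vl y ∨ vl y + 1 = vl x ∨ vl x + 2 = vl y ∨ vl y + 2 = vl x)

lemma GP.symm {x y : Fin a ⊕ Fin b} (h : GP x y) : GP y x :=
  ⟨h.1.symm, by rcases h.2 with h | h | h | h <;> omega⟩

/-! ### Mutual-visibility sets of the bow graph -/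

lemma some_ne_some_of_vl {x y : Fin a ⊕ Fin b} (h : vl x ≠ vl y) :
    (some x : Option (Fin a ⊕ Fin b)) ≠ some y := by
  intro hc
  rw [Option.some_inj] at hc
  subst hc
  exact h rfl

lemma mvs_of_none_not_mem (S : Finset (Option (Fin a ⊕ Fin b))) (h : none ∉ S) :
    MutualVisibilitySet (bowGraph a b) ↑S := by
  intro u hu v hv
  rcases eq_or_ne u v with rfl | hne
  · exact xvis_refl u
  obtain ⟨x, rfl⟩ : ∃ x, u = some x := by
    cases u with
    | none => exact absurd (by simpa using hu) h
    | some x => exact ⟨x, rfl⟩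
  obtain ⟨y, rfl⟩ : ∃ y, v = some y := by
    cases v with
    | none => exact absurd (by simpa using hv) h
    | some y => exact ⟨y, rfl⟩
  by_cases hadj : (bowGraph a b).Adj (some x) (some y)
  · exact xvis_adj hadj
  · exact xvis_two hne hadj (bow_adj_none_some x).symm (bow_adj_none_some y)
      (by simpa using h)

lemma xvis_of_gp {X : Set (Option (Fin a ⊕ Fin b))} {x y : Fin a ⊕ Fin b}
    (hxy : x ≠ y) (hgp : GP x y)
    (hX : vl x + 2 = vl y → some (bump x) ∉ X)
    (hX' : vl y + 2 = vl x → some (bump y) ∉ X) :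
    XVisible (bowGraph a b) X (some x) (some y) := by
  obtain ⟨hs, hd⟩ := hgp
  have hne : (some x : Option (Fin a ⊕ Fin b)) ≠ some y := by simpa using hxy
  rcases hd with h | h | h | h
  · exact xvis_adj (bow_adj_some_some.2 ⟨hs, Or.inl h⟩)
  · exact xvis_adj (bow_adj_some_some.2 ⟨hs, Or.inr h⟩)
  · have hv := vl_bump hs h
    have h1 : (bowGraph a b).Adj (some x) (some (bump x)) :=
      bow_adj_some_some.2 ⟨(sd_bump x).symm, Or.inl (by omega)⟩
    have h2 : (bowGraph a b).Adj (some (bump x)) (some y) :=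
      bow_adj_some_some.2 ⟨(sd_bump x).trans hs, Or.inl (by omega)⟩
    have hna : ¬ (bowGraph a b).Adj (some x) (some y) := by
      intro hc
      have := (bow_adj_some_some.1 hc).2
      omega
    exact xvis_two hne hna h1 h2 (hX h)
  · have hv := vl_bump hs.symm h
    have h1 : (bowGraph a b).Adj (some x) (some (bump y)) :=
      bow_adj_some_some.2 ⟨((sd_bump y).trans hs.symm).symm, Or.inr (by omega)⟩
    have h2 : (bowGraph a b).Adj (some (bump y)) (some y) :=
      bow_adj_some_some.2 ⟨(sd_bump y), Or.inr (by omega)⟩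
    have hna : ¬ (bowGraph a b).Adj (some x) (some y) := by
      intro hc
      have := (bow_adj_some_some.1 hc).2
      omega
    exact xvis_two hne hna h1 h2 (hX' h)

lemma mvs_singleton_none :
    MutualVisibilitySet (bowGraph a b) ↑({none} : Finset (Option (Fin a ⊕ Fin b))) := by
  intro u hu v hv
  simp only [Finset.coe_singleton, Set.mem_singleton_iff] at hu hv
  subst hu; subst hv
  exact xvis_refl _

lemma mvs_pair (z : Fin a ⊕ Fin b) :
    MutualVisibilitySet (bowGraph a b)
      ↑({none, some z} : Finset (Option (Fin a ⊕ Fin b))) := by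
  intro u hu v hv
  simp only [Finset.coe_insert, Finset.coe_singleton, Set.mem_insert_iff,
    Set.mem_singleton_iff] at hu hv
  rcases hu with rfl | rfl <;> rcases hv with rfl | rfl
  · exact xvis_refl _
  · exact xvis_adj (bow_adj_none_some z)
  · exact xvis_adj (bow_adj_none_some z).symm
  · exact xvis_refl _

lemma mvs_triple {x y : Fin a ⊕ Fin b} (hxy : x ≠ y) (hgp : GP x y) :
    MutualVisibilitySet (bowGraph a b)
      ↑({none, some x, some y} : Finset (Option (Fin a ⊕ Fin b))) := by
  have hb1 : vl x + 2 = vl y →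
      (some (bump x) : Option (Fin a ⊕ Fin b)) ∉
        (↑({none, some x, some y} : Finset (Option (Fin a ⊕ Fin b))) :
          Set (Option (Fin a ⊕ Fin b))) := by
    intro h2 hc
    have hvb := vl_bump hgp.1 h2
    simp only [Finset.coe_insert, Finset.coe_singleton, Set.mem_insert_iff,
      Set.mem_singleton_iff] at hc
    rcases hc with hc | hc | hc
    · exact nomatch hc
    · have := congrArg vl (Option.some_inj.mp hc); omega
    · have := congrArg vl (Option.some_inj.mp hc); omega
  have hb2 : vl y + 2 = vl x →
      (some (bump y) : Option (Fin a ⊕ Fin b)) ∉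
        (↑({none, some x, some y} : Finset (Option (Fin a ⊕ Fin b))) :
          Set (Option (Fin a ⊕ Fin b))) := by
    intro h2 hc
    have hvb := vl_bump hgp.1.symm h2
    simp only [Finset.coe_insert, Finset.coe_singleton, Set.mem_insert_iff,
      Set.mem_singleton_iff] at hc
    rcases hc with hc | hc | hc
    · exact nomatch hc
    · have := congrArg vl (Option.some_inj.mp hc); omega
    · have := congrArg vl (Option.some_inj.mp hc); omega
  intro u hu v hv
  simp only [Finset.coe_insert, Finset.coe_singleton, Set.mem_insert_iff,
    Set.mem_singleton_iff] at hu hv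
  rcases hu with rfl | rfl | rfl <;> rcases hv with rfl | rfl | rfl
  · exact xvis_refl _
  · exact xvis_adj (bow_adj_none_some x)
  · exact xvis_adj (bow_adj_none_some y)
  · exact xvis_adj (bow_adj_none_some x).symm
  · exact xvis_refl _
  · exact xvis_of_gp hxy hgp hb1 hb2
  · exact xvis_adj (bow_adj_none_some y).symm
  · exact xvis_of_gp (Ne.symm hxy) hgp.symm hb2 hb1
  · exact xvis_refl _

lemma neg_good {S : Finset (Option (Fin a ⊕ Fin b))}
    (hS : MutualVisibilitySet (bowGraph a b) ↑S) (h0 : none ∈ S)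
    {x y : Fin a ⊕ Fin b} (hx : some x ∈ S) (hy : some y ∈ S) (hxy : x ≠ y) :
    GP x y := by
  by_contra hng
  have hvis := hS _ (by simpa using hx) _ (by simpa using hy)
  have hna : ¬ (bowGraph a b).Adj (some x) (some y) := by
    intro hc
    obtain ⟨h1, h2⟩ := bow_adj_some_some.1 hc
    exact hng ⟨h1, by omega⟩
  have hne : (some x : Option (Fin a ⊕ Fin b)) ≠ some y := by simpa using hxy
  have hd := dist_eq_two hne hna (bow_adj_none_some x).symm (bow_adj_none_some y)
  refine not_xvis_two hd ?_ hvis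
  intro t h1 h2
  rcases bow_adj_some.1 h1 with rfl | ⟨z, rfl, hsz, hvz⟩
  · exact ⟨by simpa using h0, by simp, by simp⟩
  · have h2' : (bowGraph a b).Adj (some y) (some z) := h2.symm
    obtain ⟨hsz2, hvz2⟩ := bow_adj_some_some.1 h2'
    have hvv : vl x ≠ vl y := fun hv => hxy (eq_of_sd_vl (hsz.trans hsz2.symm) hv)
    exact absurd ⟨hsz.trans hsz2.symm, by omega⟩ hng

lemma pair_mid {S : Finset (Option (Fin a ⊕ Fin b))}
    (hS : MutualVisibilitySet (bowGraph a b) ↑S) (h0 : none ∈ S)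
    {x y z : Fin a ⊕ Fin b} (hx : some x ∈ S) (hy : some y ∈ S) (hz : some z ∈ S)
    (hs : sd x = sd y) (hd2 : vl x + 2 = vl y)
    (hsz : sd z = sd x) (hvz : vl z = vl x + 1) : False := by
  have hvis := hS _ (by simpa using hx) _ (by simpa using hy)
  have hna : ¬ (bowGraph a b).Adj (some x) (some y) := by
    intro hc
    have := (bow_adj_some_some.1 hc).2
    omega
  have hne : (some x : Option (Fin a ⊕ Fin b)) ≠ some y :=
    some_ne_some_of_vl (by omega)
  have hd := dist_eq_two hne hna (bow_adj_none_some x).symm (bow_adj_none_some y)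
  refine not_xvis_two hd ?_ hvis
  intro t h1 h2
  rcases bow_adj_some.1 h1 with rfl | ⟨w, rfl, hsw, hvw⟩
  · exact ⟨by simpa using h0, by simp, by simp⟩
  · have h2' : (bowGraph a b).Adj (some y) (some w) := h2.symm
    obtain ⟨hsw2, hvw2⟩ := bow_adj_some_some.1 h2'
    have hwz : w = z := eq_of_sd_vl (hsw.symm.trans hsz.symm) (by omega)
    subst hwz
    exact ⟨by simpa using hz, some_ne_some_of_vl (by omega),
      some_ne_some_of_vl (by omega)⟩

lemma not_three {S : Finset (Option (Fin a ⊕ Fin b))}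
    (hS : MutualVisibilitySet (bowGraph a b) ↑S) (h0 : none ∈ S)
    {x y z : Fin a ⊕ Fin b} (hx : some x ∈ S) (hy : some y ∈ S) (hz : some z ∈ S)
    (hxy : x ≠ y) (hxz : x ≠ z) (hyz : y ≠ z) : False := by
  have g1 := neg_good hS h0 hx hy hxy
  have g2 := neg_good hS h0 hx hz hxz
  have g3 := neg_good hS h0 hy hz hyz
  have hvxy : vl x ≠ vl y := fun h => hxy (eq_of_sd_vl g1.1 h)
  have hvxz : vl x ≠ vl z := fun h => hxz (eq_of_sd_vl g2.1 h)
  have hvyz : vl y ≠ vl z := fun h => hyz (eq_of_sd_vl g3.1 h)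
  have d1 := g1.2
  have d2 := g2.2
  have d3 := g3.2
  rcases Nat.lt_trichotomy (vl x) (vl y) with h1 | h1 | h1
  · rcases Nat.lt_trichotomy (vl y) (vl z) with h2 | h2 | h2
    · exact pair_mid hS h0 hx hz hy g2.1 (by omega) g1.1.symm (by omega)
    · exact hvyz h2
    · rcases Nat.lt_trichotomy (vl x) (vl z) with h3 | h3 | h3
      · exact pair_mid hS h0 hx hy hz g1.1 (by omega) g2.1.symm (by omega)
      · exact hvxz h3
      · exact pair_mid hS h0 hz hy hx g3.1.symm (by omega) g2.1 (by omega)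
  · exact hvxy h1
  · rcases Nat.lt_trichotomy (vl x) (vl z) with h2 | h2 | h2
    · exact pair_mid hS h0 hy hz hx g3.1 (by omega) g1.1 (by omega)
    · exact hvxz h2
    · rcases Nat.lt_trichotomy (vl y) (vl z) with h3 | h3 | h3
      · exact pair_mid hS h0 hy hx hz g1.1.symm (by omega) g3.1.symm (by omega)
      · exact hvyz h3
      · exact pair_mid hS h0 hz hx hy g2.1.symm (by omega) g3.1 (by omega)

/-! ### Counting -/

lemma sum_pow_card {α : Type*} [DecidableEq α] (T : Finset α) :
    ∑ S ∈ T.powerset, (Polynomial.X : Polynomial ℕ) ^ S.card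
      = (1 + Polynomial.X) ^ T.card := by
  have h := Finset.prod_add (fun _ : α => (Polynomial.X : Polynomial ℕ))
    (fun _ => (1 : Polynomial ℕ)) T
  simp only [Finset.prod_const, Finset.prod_const_one, one_pow, mul_one] at h
  rw [add_comm 1 (Polynomial.X : Polynomial ℕ), ← h]

/-- Count of "good ordered pairs" on a path with `a` vertices. -/
lemma card_goodFin (a : ℕ) (ha : 2 ≤ a) :
    ((Finset.univ : Finset (Fin a × Fin a)).filter
        (fun p => p.1.val + 1 = p.2.val ∨ p.1.val + 2 = p.2.val)).card
      = 2 * a - 3 := by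
  rw [← Finset.card_range (2 * a - 3)]
  refine Finset.card_bij'
    (fun p _ => 2 * p.1.val + (p.2.val - p.1.val - 1))
    (fun k hk => (⟨k / 2, by simp only [Finset.mem_range] at hk; omega⟩,
      ⟨k / 2 + 1 + k % 2, by simp only [Finset.mem_range] at hk; omega⟩))
    ?_ ?_ ?_ ?_
  · intro p hp
    simp only [Finset.mem_filter, Finset.mem_univ, true_and] at hp
    have h2 := p.2.isLt
    simp only [Finset.mem_range]
    omega
  · intro k hk
    simp only [Finset.mem_range] at hk
    simp only [Finset.mem_filter, Finset.mem_univ, true_and]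
    omega
  · intro p hp
    simp only [Finset.mem_filter, Finset.mem_univ, true_and] at hp
    have h1 := p.1.isLt
    have h2 := p.2.isLt
    ext <;> simp <;> omega
  · intro k hk
    simp only [Finset.mem_range] at hk
    simp only []
    omega

open Classical in
/-- Ordered good pairs. -/
noncomputable def GPfin (a b : ℕ) : Finset ((Fin a ⊕ Fin b) × (Fin a ⊕ Fin b)) :=
  Finset.univ.filter (fun p => GP p.1 p.2 ∧ vl p.1 < vl p.2)

open Classical in
lemma GPfin_eq (a b : ℕ) :
    GPfin a b =
      (((Finset.univ : Finset (Fin a × Fin a)).filter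
          (fun p => p.1.val + 1 = p.2.val ∨ p.1.val + 2 = p.2.val)).image
        (fun p => (Sum.inl p.1, Sum.inl p.2))) ∪
      (((Finset.univ : Finset (Fin b × Fin b)).filter
          (fun p => p.1.val + 1 = p.2.val ∨ p.1.val + 2 = p.2.val)).image
        (fun p => (Sum.inr p.1, Sum.inr p.2))) := by
  ext ⟨u, v⟩
  simp only [GPfin, Finset.mem_filter, Finset.mem_univ, true_and, Finset.mem_union,
    Finset.mem_image]
  constructor
  · rintro ⟨⟨hs, hd⟩, hlt⟩
    cases u with
    | inl i =>
      cases v with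
      | inl j =>
        refine Or.inl ⟨(i, j), ?_, rfl⟩
        simp only [vl, Sum.elim_inl] at hd hlt
        show i.val + 1 = j.val ∨ i.val + 2 = j.val
        omega
      | inr j => simp [sd] at hs
    | inr i =>
      cases v with
      | inl j => simp [sd] at hs
      | inr j =>
        refine Or.inr ⟨(i, j), ?_, rfl⟩
        simp only [vl, Sum.elim_inr] at hd hlt
        show i.val + 1 = j.val ∨ i.val + 2 = j.val
        omega
  · rintro (⟨⟨i, j⟩, hm, heq⟩ | ⟨⟨i, j⟩, hm, heq⟩) <;>
    · have hd : i.val + 1 = j.val ∨ i.val + 2 = j.val := hm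
      injection heq with h1 h2
      subst h1; subst h2
      refine ⟨⟨rfl, ?_⟩, ?_⟩ <;> simp only [vl, Sum.elim_inl, Sum.elim_inr] <;> omega

lemma card_GPfin (a b : ℕ) (ha : 2 ≤ a) (hb : 2 ≤ b) :
    (GPfin a b).card = 2 * a + 2 * b - 6 := by
  classical
  rw [GPfin_eq]
  rw [Finset.card_union_of_disjoint]
  · rw [Finset.card_image_of_injective _ (by rintro ⟨x1, x2⟩ ⟨y1, y2⟩ h; simpa [Prod.ext_iff] using h),
      Finset.card_image_of_injective _ (by rintro ⟨x1, x2⟩ ⟨y1, y2⟩ h; simpa [Prod.ext_iff] using h),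
      card_goodFin a ha, card_goodFin b hb]
    omega
  · rw [Finset.disjoint_left]
    rintro p hp hq
    simp only [Finset.mem_image] at hp hq
    obtain ⟨x, -, rfl⟩ := hp
    obtain ⟨y, -, hy⟩ := hq
    have := congrArg Prod.fst hy
    simp at this

lemma card_pair_none (z : Fin a ⊕ Fin b) :
    ({none, some z} : Finset (Option (Fin a ⊕ Fin b))).card = 2 := by
  rw [Finset.card_insert_of_notMem (by simp), Finset.card_singleton]

lemma card_triple_none {x y : Fin a ⊕ Fin b} (h : x ≠ y) :
    ({none, some x, some y} : Finset (Option (Fin a ⊕ Fin b))).card = 3 := by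
  rw [Finset.card_insert_of_notMem (by simp),
    Finset.card_insert_of_notMem (by simp [h]), Finset.card_singleton]

open Classical in
lemma filter_not_none (a b : ℕ) :
    (Finset.univ.powerset.filter
        (fun S : Finset (Option (Fin a ⊕ Fin b)) =>
          MutualVisibilitySet (bowGraph a b) ↑S ∧ none ∉ S))
      = ((Finset.univ : Finset (Option (Fin a ⊕ Fin b))).erase none).powerset := by
  ext S
  simp only [Finset.mem_filter, Finset.mem_powerset, Finset.subset_univ, true_and,
    Finset.subset_erase]
  constructor
  · rintro ⟨-, h2⟩
    exact h2
  · intro h2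
    exact ⟨mvs_of_none_not_mem S h2, h2⟩

open Classical in
lemma filter_yes_none (a b : ℕ) :
    (Finset.univ.powerset.filter
        (fun S : Finset (Option (Fin a ⊕ Fin b)) =>
          MutualVisibilitySet (bowGraph a b) ↑S ∧ none ∈ S))
      = {({none} : Finset (Option (Fin a ⊕ Fin b)))}
          ∪ Finset.univ.image
              (fun z : Fin a ⊕ Fin b => ({none, some z} : Finset (Option (Fin a ⊕ Fin b))))
          ∪ (GPfin a b).image
              (fun p => ({none, some p.1, some p.2} : Finset (Option (Fin a ⊕ Fin b)))) := by
  ext S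
  simp only [Finset.mem_filter, Finset.mem_powerset, Finset.subset_univ, true_and,
    Finset.mem_union, Finset.mem_singleton, Finset.mem_image, Finset.mem_univ]
  constructor
  · rintro ⟨hmvs, h0⟩
    have hins : insert none (S.erase none) = S := Finset.insert_erase h0
    have hTcard : (S.erase none).card ≤ 2 := by
      by_contra hc
      push_neg at hc
      obtain ⟨x, y, z, hx, hy, hz, hxy, hxz, hyz⟩ := Finset.two_lt_card_iff.mp hc
      obtain ⟨x', rfl⟩ := Option.ne_none_iff_exists'.mp (Finset.mem_erase.mp hx).1
      obtain ⟨y', rfl⟩ := Option.ne_none_iff_exists'.mp (Finset.mem_erase.mp hy).1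
      obtain ⟨z', rfl⟩ := Option.ne_none_iff_exists'.mp (Finset.mem_erase.mp hz).1
      exact not_three hmvs h0 (Finset.mem_erase.mp hx).2 (Finset.mem_erase.mp hy).2
        (Finset.mem_erase.mp hz).2
        (fun h => hxy (by rw [h])) (fun h => hxz (by rw [h])) (fun h => hyz (by rw [h]))
    match h2 : (S.erase none).card, hTcard with
    | 0, _ =>
      left; left
      have hT : S.erase none = ∅ := Finset.card_eq_zero.mp h2
      rw [← hins, hT]
      rfl
    | 1, _ =>
      left; right
      obtain ⟨t, ht⟩ := Finset.card_eq_one.mp h2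
      have htm : t ∈ S.erase none := ht ▸ Finset.mem_singleton_self t
      obtain ⟨z, rfl⟩ := Option.ne_none_iff_exists'.mp (Finset.mem_erase.mp htm).1
      exact ⟨z, by rw [← hins, ht]⟩
    | 2, _ =>
      right
      obtain ⟨t1, t2, hne, hT⟩ := Finset.card_eq_two.mp h2
      have ht1 : t1 ∈ S.erase none := hT ▸ (by simp)
      have ht2 : t2 ∈ S.erase none := hT ▸ (by simp)
      obtain ⟨z1, rfl⟩ := Option.ne_none_iff_exists'.mp (Finset.mem_erase.mp ht1).1
      obtain ⟨z2, rfl⟩ := Option.ne_none_iff_exists'.mp (Finset.mem_erase.mp ht2).1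
      have hz12 : z1 ≠ z2 := fun h => hne (by rw [h])
      have hgp := neg_good hmvs h0 (Finset.mem_erase.mp ht1).2 (Finset.mem_erase.mp ht2).2 hz12
      have hvne : vl z1 ≠ vl z2 := fun h => hz12 (eq_of_sd_vl hgp.1 h)
      rcases Nat.lt_or_ge (vl z1) (vl z2) with hlt | hge
      · refine ⟨(z1, z2), ?_, ?_⟩
        · simp only [GPfin, Finset.mem_filter, Finset.mem_univ, true_and]
          exact ⟨hgp, hlt⟩
        · rw [← hins, hT]
      · refine ⟨(z2, z1), ?_, ?_⟩
        · simp only [GPfin, Finset.mem_filter, Finset.mem_univ, true_and]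
          exact ⟨hgp.symm, by omega⟩
        · rw [← hins, hT, Finset.pair_comm (some z1) (some z2)]
  · rintro ((rfl | ⟨z, rfl⟩) | ⟨p, hp, rfl⟩)
    · exact ⟨mvs_singleton_none, by simp⟩
    · exact ⟨mvs_pair z, by simp⟩
    · have hm : GP p.1 p.2 ∧ vl p.1 < vl p.2 := by
        simpa [GPfin] using hp
      have hne : p.1 ≠ p.2 := fun h => by
        have := hm.2; rw [h] at this; omega
      exact ⟨mvs_triple hne hm.1, by simp⟩

open Classical in
lemma sum_yes_none (a b : ℕ) (ha : 2 ≤ a) (hb : 2 ≤ b) :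
    ∑ S ∈ ({({none} : Finset (Option (Fin a ⊕ Fin b)))}
        ∪ Finset.univ.image
            (fun z : Fin a ⊕ Fin b => ({none, some z} : Finset (Option (Fin a ⊕ Fin b))))
        ∪ (GPfin a b).image
            (fun p => ({none, some p.1, some p.2} : Finset (Option (Fin a ⊕ Fin b))))),
      (Polynomial.X : Polynomial ℕ) ^ S.card
    = Polynomial.X + Polynomial.C (a + b) * Polynomial.X ^ 2
        + Polynomial.C (2 * a + 2 * b - 6) * Polynomial.X ^ 3 := by
  have hcard3 : ∀ p ∈ GPfin a b,
      ({none, some p.1, some p.2} : Finset (Option (Fin a ⊕ Fin b))).card = 3 := by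
    intro p hp
    have hm : GP p.1 p.2 ∧ vl p.1 < vl p.2 := by simpa [GPfin] using hp
    exact card_triple_none (fun h => by have := hm.2; rw [h] at this; omega)
  have hd12 : Disjoint ({({none} : Finset (Option (Fin a ⊕ Fin b)))} :
      Finset (Finset (Option (Fin a ⊕ Fin b))))
      (Finset.univ.image
        (fun z : Fin a ⊕ Fin b => ({none, some z} : Finset (Option (Fin a ⊕ Fin b))))) := by
    rw [Finset.disjoint_left]
    rintro S hS1 hS2
    rw [Finset.mem_singleton] at hS1
    obtain ⟨z, -, rfl⟩ := Finset.mem_image.mp hS2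
    have := card_pair_none z
    rw [hS1] at this
    simp at this
  have hd123 : Disjoint (({({none} : Finset (Option (Fin a ⊕ Fin b)))} :
      Finset (Finset (Option (Fin a ⊕ Fin b))))
      ∪ Finset.univ.image
          (fun z : Fin a ⊕ Fin b => ({none, some z} : Finset (Option (Fin a ⊕ Fin b)))))
      ((GPfin a b).image
        (fun p => ({none, some p.1, some p.2} : Finset (Option (Fin a ⊕ Fin b))))) := by
    rw [Finset.disjoint_left]
    rintro S hS1 hS2
    obtain ⟨p, hp, rfl⟩ := Finset.mem_image.mp hS2
    have h3 := hcard3 p hp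
    rcases Finset.mem_union.mp hS1 with h | h
    · rw [Finset.mem_singleton] at h
      rw [h] at h3
      simp at h3
    · obtain ⟨z, -, hz⟩ := Finset.mem_image.mp h
      rw [← hz, card_pair_none z] at h3
      simp at h3
  rw [Finset.sum_union hd123, Finset.sum_union hd12, Finset.sum_singleton]
  have e1 : (({none} : Finset (Option (Fin a ⊕ Fin b)))).card = 1 := Finset.card_singleton _
  rw [e1, pow_one]
  have e2 : ∑ S ∈ Finset.univ.image
      (fun z : Fin a ⊕ Fin b => ({none, some z} : Finset (Option (Fin a ⊕ Fin b)))),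
      (Polynomial.X : Polynomial ℕ) ^ S.card
      = Polynomial.C (a + b) * Polynomial.X ^ 2 := by
    rw [Finset.sum_image]
    · rw [Finset.sum_congr rfl (fun z _ => by rw [card_pair_none z])]
      rw [Finset.sum_const, Finset.card_univ, Fintype.card_sum, Fintype.card_fin,
        Fintype.card_fin, nsmul_eq_mul, ← Polynomial.C_eq_natCast, Nat.cast_id]
    · intro z _ z' _ h
      have : (some z : Option (Fin a ⊕ Fin b)) ∈
          ({none, some z'} : Finset (Option (Fin a ⊕ Fin b))) := by
        simp only [] at h; rw [← h]; simp
      simpa using this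
  have e3 : ∑ S ∈ (GPfin a b).image
      (fun p => ({none, some p.1, some p.2} : Finset (Option (Fin a ⊕ Fin b)))),
      (Polynomial.X : Polynomial ℕ) ^ S.card
      = Polynomial.C (2 * a + 2 * b - 6) * Polynomial.X ^ 3 := by
    rw [Finset.sum_image]
    · rw [Finset.sum_congr rfl (fun p hp => by rw [hcard3 p hp])]
      rw [Finset.sum_const, card_GPfin a b ha hb, nsmul_eq_mul, ← Polynomial.C_eq_natCast,
        Nat.cast_id]
    · intro p hp q hq h
      have hmp : GP p.1 p.2 ∧ vl p.1 < vl p.2 := by simpa [GPfin] using hp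
      have hmq : GP q.1 q.2 ∧ vl q.1 < vl q.2 := by simpa [GPfin] using hq
      have hm1 : (some p.1 : Option (Fin a ⊕ Fin b)) ∈
          ({none, some q.1, some q.2} : Finset (Option (Fin a ⊕ Fin b))) := by
        simp only [] at h; rw [← h]; simp
      have hm2 : (some p.2 : Option (Fin a ⊕ Fin b)) ∈
          ({none, some q.1, some q.2} : Finset (Option (Fin a ⊕ Fin b))) := by
        simp only [] at h; rw [← h]; simp
      simp only [Finset.mem_insert, Finset.mem_singleton, reduceCtorEq, false_or,
        Option.some_inj] at hm1 hm2
      have hlp := hmp.2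
      have hlq := hmq.2
      rcases hm1 with e1 | e1 <;> rcases hm2 with e2 | e2
      · exfalso
        have v1 := congrArg vl e1
        have v2 := congrArg vl e2
        omega
      · exact Prod.ext e1 e2
      · exfalso
        have v1 := congrArg vl e1
        have v2 := congrArg vl e2
        omega
      · exfalso
        have v1 := congrArg vl e1
        have v2 := congrArg vl e2
        omega
  rw [e2, e3]

end BowAux

theorem visPoly_bow (m n : ℕ) (hm : 3 ≤ m) (hn : 3 ≤ n) :
    visPoly (bowGraph (m - 1) (n - 1)) =
      (1 + Polynomial.X) ^ (m + n - 2) + Polynomial.X +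
        Polynomial.C (m + n - 2) * Polynomial.X ^ 2 +
        Polynomial.C (2 * m + 2 * n - 10) * Polynomial.X ^ 3 := by
  classical
  have ha : 2 ≤ m - 1 := by omega
  have hb : 2 ≤ n - 1 := by omega
  rw [visPoly]
  rw [← Finset.sum_filter_add_sum_filter_not
    (Finset.univ.powerset.filter
      (fun S : Finset (Option (Fin (m - 1) ⊕ Fin (n - 1))) =>
        MutualVisibilitySet (bowGraph (m - 1) (n - 1)) ↑S))
    (fun S => none ∈ S) (fun S => (Polynomial.X : Polynomial ℕ) ^ S.card)]
  rw [Finset.filter_filter, Finset.filter_filter]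
  rw [show (Finset.univ.powerset.filter
      (fun S : Finset (Option (Fin (m - 1) ⊕ Fin (n - 1))) =>
        MutualVisibilitySet (bowGraph (m - 1) (n - 1)) ↑S ∧ none ∈ S))
    = _ from BowAux.filter_yes_none (m - 1) (n - 1)]
  rw [show (Finset.univ.powerset.filter
      (fun S : Finset (Option (Fin (m - 1) ⊕ Fin (n - 1))) =>
        MutualVisibilitySet (bowGraph (m - 1) (n - 1)) ↑S ∧ none ∉ S))
    = _ from BowAux.filter_not_none (m - 1) (n - 1)]
  rw [BowAux.sum_yes_none (m - 1) (n - 1) ha hb, BowAux.sum_pow_card]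
  have hc : ((Finset.univ : Finset (Option (Fin (m - 1) ⊕ Fin (n - 1)))).erase none).card
      = m + n - 2 := by
    rw [Finset.card_erase_of_mem (Finset.mem_univ _), Finset.card_univ]
    simp only [Fintype.card_option, Fintype.card_sum, Fintype.card_fin]
    omega
  rw [hc]
  have h1 : m - 1 + (n - 1) = m + n - 2 := by omega
  have h2 : 2 * (m - 1) + 2 * (n - 1) - 6 = 2 * m + 2 * n - 10 := by omega
  rw [h1, h2]
  ring
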